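/- Let f : ℝ^m → [0, ∞) be a probability density function that is Lipschitz and bounded above, let 0 < γ₁ < γ₂ < 1, and let (ω_n) be a sequence of integers with γ₁·n < ω_n < γ₂·n for all sufficiently large n. Let X_1, X_2, … be i.i.d. random vectors in ℝ^m with density f. Then d_{ω_n}(X_1, …, X_n) → 0 in probability, and n · d_{ω_n}(X_1, …, X_n)^{m/2} → ∞ in probability (i.e., for every K > 0, P( n · d_{ω_n}^{m/2} ≥ K ) → 1 as n → ∞); that is, d_{ω_n} satisfies the defining limits of an admissible bandwidth in probability. -/

import Mathlib

open MeasureTheory ProbabilityTheory Filter Metric ENNReal Topology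

/-- The graph on `{1, …, n}` with an edge between distinct `i, j` whenever
`‖x i − x j‖ ≤ r`. -/
def ripsGraph {n m : ℕ} (x : Fin n → EuclideanSpace ℝ (Fin m)) (r : ℝ) :
    SimpleGraph (Fin n) where
  Adj i j := i ≠ j ∧ dist (x i) (x j) ≤ r
  symm := ⟨fun i j h => ⟨h.1.symm, by rw [dist_comm]; exact h.2⟩⟩
  loopless := ⟨fun i h => h.1 rfl⟩

/-- The `k`-th Rips death diameter of the point cloud `x`. -/
noncomputable def ripsDeath {n m : ℕ} (x : Fin n → EuclideanSpace ℝ (Fin m)) (k : ℕ) : ℝ :=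
  sInf {r : ℝ | 0 ≤ r ∧ Nat.card (ripsGraph x r).ConnectedComponent ≤ n - k}

lemma ripsGraph_adj {n m : ℕ} {x : Fin n → EuclideanSpace ℝ (Fin m)} {r : ℝ} {i j : Fin n} :
    (ripsGraph x r).Adj i j ↔ i ≠ j ∧ dist (x i) (x j) ≤ r := Iff.rfl

lemma ripsDeath_nonneg {n m : ℕ} (x : Fin n → EuclideanSpace ℝ (Fin m)) (k : ℕ) :
    0 ≤ ripsDeath x k :=
  Real.sInf_nonneg (fun _ h => h.1)

lemma ripsDeath_le {n m : ℕ} {x : Fin n → EuclideanSpace ℝ (Fin m)} {k : ℕ} {r : ℝ}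
    (hr : 0 ≤ r) (h : Nat.card (ripsGraph x r).ConnectedComponent ≤ n - k) :
    ripsDeath x k ≤ r :=
  csInf_le ⟨0, fun _ h => h.1⟩ ⟨hr, h⟩

lemma comps_anti {n m : ℕ} (x : Fin n → EuclideanSpace ℝ (Fin m)) {r₁ r₂ : ℝ} (h : r₁ ≤ r₂) :
    Nat.card (ripsGraph x r₂).ConnectedComponent ≤ Nat.card (ripsGraph x r₁).ConnectedComponent := by
  have hle : ripsGraph x r₁ ≤ ripsGraph x r₂ := fun i j hij => ripsGraph_adj.2 ⟨(ripsGraph_adj.1 hij).1, (ripsGraph_adj.1 hij).2.trans h⟩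
  refine Nat.card_le_card_of_surjective
    (SimpleGraph.ConnectedComponent.map (SimpleGraph.Hom.ofLE hle)) ?_
  intro c
  refine c.ind (fun v => ⟨SimpleGraph.connectedComponentMk _ v, rfl⟩)

lemma comps_le_one {n m : ℕ} [NeZero n] (x : Fin n → EuclideanSpace ℝ (Fin m)) :
    ∃ r : ℝ, 0 ≤ r ∧ Nat.card (ripsGraph x r).ConnectedComponent ≤ 1 := by
  obtain ⟨R, hR0, hR⟩ : ∃ R : ℝ, 0 ≤ R ∧ ∀ i j : Fin n, dist (x i) (x j) ≤ R := by
    obtain ⟨R, hR⟩ := (Set.finite_range (fun p : Fin n × Fin n => dist (x p.1) (x p.2))).bddAbove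
    exact ⟨max R 0, le_max_right _ _, fun i j =>
      le_trans (hR ⟨(i, j), rfl⟩) (le_max_left _ _)⟩
  refine ⟨R, hR0, ?_⟩
  have : (ripsGraph x R).Preconnected := by
    intro i j
    rcases eq_or_ne i j with rfl | hij
    · exact SimpleGraph.Reachable.refl _
    · exact SimpleGraph.Adj.reachable (ripsGraph_adj.2 ⟨hij, hR i j⟩)
  have hs := this.subsingleton_connectedComponent
  have hsurj : Function.Surjective
      (fun _ : Unit => (ripsGraph x R).connectedComponentMk ⟨0, Nat.pos_of_ne_zero (NeZero.ne n)⟩) :=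
    fun c => ⟨(), Subsingleton.elim _ _⟩
  simpa using Nat.card_le_card_of_surjective _ hsurj

lemma comps_le_cover {n m : ℕ} (x : Fin n → EuclideanSpace ℝ (Fin m)) {r : ℝ}
    (t : Finset (EuclideanSpace ℝ (Fin m))) (S : Finset (Fin n))
    (hcov : ∀ i ∈ S, ∃ c ∈ t, dist (x i) c < r / 2) :
    Nat.card (ripsGraph x r).ConnectedComponent ≤ t.card + (n - S.card) := by
  classical
  rcases Nat.eq_zero_or_pos n with rfl | hn
  · have : IsEmpty (ripsGraph x r).ConnectedComponent := by
      constructor; intro c; exact c.ind (fun v => v.elim0)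
    simp [Nat.card_of_isEmpty]
  have i₀ : Fin n := ⟨0, hn⟩
  set G := ripsGraph x r with hG
  let g : (↥t ⊕ ↥(Sᶜ : Finset (Fin n))) → G.ConnectedComponent := fun z =>
    match z with
    | Sum.inl c =>
        if h : ∃ i ∈ S, dist (x i) (c : EuclideanSpace ℝ (Fin m)) < r / 2 then
          G.connectedComponentMk h.choose else G.connectedComponentMk i₀
    | Sum.inr i => G.connectedComponentMk i
  have hsurj : Function.Surjective g := by
    intro comp
    refine comp.ind (fun v => ?_)
    by_cases hv : v ∈ S
    · obtain ⟨c, hct, hcd⟩ := hcov v hv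
      have hex : ∃ i ∈ S, dist (x i) c < r / 2 := ⟨v, hv, hcd⟩
      refine ⟨Sum.inl ⟨c, hct⟩, ?_⟩
      show (if h : ∃ i ∈ S, dist (x i) c < r / 2 then G.connectedComponentMk h.choose
          else G.connectedComponentMk i₀) = G.connectedComponentMk v
      rw [dif_pos hex]
      obtain ⟨hjS, hjd⟩ := hex.choose_spec
      rcases eq_or_ne hex.choose v with he | he
      · rw [he]
      · refine SimpleGraph.ConnectedComponent.sound (SimpleGraph.Adj.reachable ?_)
        refine ripsGraph_adj.2 ⟨he, ?_⟩
        calc dist (x hex.choose) (x v) ≤ dist (x hex.choose) c + dist (x v) c := by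
              rw [dist_comm (x v) c]; exact dist_triangle _ _ _
          _ ≤ r / 2 + r / 2 := by linarith
          _ = r := by ring
    · exact ⟨Sum.inr ⟨v, by simp [hv]⟩, rfl⟩
  have hcard := Nat.card_le_card_of_surjective g hsurj
  calc Nat.card G.ConnectedComponent ≤ Nat.card (↥t ⊕ ↥(Sᶜ : Finset (Fin n))) := hcard
    _ = t.card + (n - S.card) := by
        rw [Nat.card_sum]
        simp [Nat.card_eq_finsetCard, Finset.card_compl]

lemma comps_ge_sub_pairs {n m : ℕ} (x : Fin n → EuclideanSpace ℝ (Fin m)) (r : ℝ) :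
    n - (Finset.univ.filter
        fun p : Fin n × Fin n => p.1 ≠ p.2 ∧ dist (x p.1) (x p.2) ≤ r).card
      ≤ Nat.card (ripsGraph x r).ConnectedComponent := by
  classical
  set G := ripsGraph x r with hG
  set P := (Finset.univ.filter
      fun p : Fin n × Fin n => p.1 ≠ p.2 ∧ dist (x p.1) (x p.2) ≤ r) with hP
  set I := (Finset.univ.filter fun i : Fin n => ∀ j, ¬ G.Adj i j) with hI
  have h1 : I.card ≤ Nat.card G.ConnectedComponent := by
    rw [← Nat.card_eq_finsetCard]
    refine Nat.card_le_card_of_injective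
      (fun i : ↥I => G.connectedComponentMk i.1) ?_
    rintro ⟨i, hi⟩ ⟨j, hj⟩ h
    have hreach := SimpleGraph.ConnectedComponent.exact h
    obtain ⟨w⟩ := hreach
    cases w with
    | nil => rfl
    | cons ha _ =>
        exact absurd ha ((Finset.mem_filter.mp hi).2 _)
  have h2 : (Finset.univ \ I).card ≤ P.card := by
    refine Finset.card_le_card_of_injOn
      (fun i => if h : ∃ j, G.Adj i j then (i, h.choose) else (i, i)) ?_ ?_
    · intro i hi
      obtain ⟨-, hni⟩ := Finset.mem_sdiff.mp hi
      have hex : ∃ j, G.Adj i j := by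
        by_contra hc
        push_neg at hc
        exact hni (Finset.mem_filter.mpr ⟨Finset.mem_univ _, hc⟩)
      simp only [dif_pos hex]
      exact Finset.mem_filter.mpr ⟨Finset.mem_univ _, (ripsGraph_adj.1 hex.choose_spec).1, (ripsGraph_adj.1 hex.choose_spec).2⟩
    · intro i _ j _ hij
      simp only at hij
      by_cases h1' : ∃ k, G.Adj i k <;> by_cases h2' : ∃ k, G.Adj j k <;>
        [rw [dif_pos h1', dif_pos h2'] at hij; rw [dif_pos h1', dif_neg h2'] at hij;
         rw [dif_neg h1', dif_pos h2'] at hij; rw [dif_neg h1', dif_neg h2'] at hij] <;>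
        exact congrArg Prod.fst hij
  have h3 : (Finset.univ \ I).card = n - I.card := by
    rw [Finset.card_sdiff_of_subset (Finset.subset_univ I)]
    simp
  have h4 : I.card ≤ n := by
    simpa using Finset.card_le_univ I
  omega

lemma comps_le_of_ripsDeath_lt {n m : ℕ} {x : Fin n → EuclideanSpace ℝ (Fin m)} {k : ℕ}
    (hk : k < n) {r : ℝ} (h : ripsDeath x k < r) :
    Nat.card (ripsGraph x r).ConnectedComponent ≤ n - k := by
  have : NeZero n := ⟨by omega⟩
  obtain ⟨R, hR0, hR1⟩ := comps_le_one x
  have hne : {r : ℝ | 0 ≤ r ∧ Nat.card (ripsGraph x r).ConnectedComponent ≤ n - k}.Nonempty :=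
    ⟨R, hR0, le_trans hR1 (by omega)⟩
  obtain ⟨r', ⟨hr'0, hr'c⟩, hr'lt⟩ :=
    (csInf_lt_iff ⟨0, fun _ h => h.1⟩ hne).mp h
  exact le_trans (comps_anti x hr'lt.le) hr'c

section Measures

variable {m : ℕ} (f : EuclideanSpace ℝ (Fin m) → ℝ)

lemma prob_of_density (hf0 : ∀ x, 0 ≤ f x) (hfint : ∫ x, f x = 1) (hfm : Measurable f) :
    IsProbabilityMeasure (volume.withDensity fun x => ENNReal.ofReal (f x)) := by
  constructor
  have hint : Integrable f := by
    by_contra h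
    rw [integral_undef h] at hfint
    exact one_ne_zero hfint.symm
  rw [withDensity_apply _ MeasurableSet.univ, Measure.restrict_univ,
    ← ofReal_integral_eq_lintegral_ofReal hint (Filter.Eventually.of_forall hf0), hfint,
    ENNReal.ofReal_one]

lemma pair_prob_le {M' : ℝ} (hfM' : ∀ x, f x ≤ M') (hfm : Measurable f)
    {Ω : Type*} [MeasureSpace Ω] [IsProbabilityMeasure (ℙ : Measure Ω)]
    (hprob : IsProbabilityMeasure (volume.withDensity fun x => ENNReal.ofReal (f x)))
    (X Y : Ω → EuclideanSpace ℝ (Fin m)) (hX : Measurable X) (hY : Measurable Y)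
    (hXY : IndepFun X Y ℙ)
    (hlX : Measure.map X ℙ = volume.withDensity fun x => ENNReal.ofReal (f x))
    (hlY : Measure.map Y ℙ = volume.withDensity fun x => ENNReal.ofReal (f x))
    {r : ℝ} (hr : 0 ≤ r) :
    ℙ {ω | dist (X ω) (Y ω) ≤ r}
      ≤ ENNReal.ofReal M' * (ENNReal.ofReal (r ^ m) * volume (ball (0 : EuclideanSpace ℝ (Fin m)) 1)) := by
  set μ := volume.withDensity fun x => ENNReal.ofReal (f x) with hμ
  set A : Set (EuclideanSpace ℝ (Fin m) × EuclideanSpace ℝ (Fin m)) :=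
    {p | dist p.1 p.2 ≤ r} with hA
  have hAmeas : MeasurableSet A := by
    have : Continuous fun p : EuclideanSpace ℝ (Fin m) × EuclideanSpace ℝ (Fin m) =>
        dist p.1 p.2 := continuous_dist
    exact this.measurable measurableSet_Iic
  have hmap : Measure.map (fun ω => (X ω, Y ω)) ℙ = μ.prod μ := by
    have h := (indepFun_iff_map_prod_eq_prod_map_map hX.aemeasurable hY.aemeasurable).mp hXY
    rw [hlX, hlY] at h
    exact h
  have hev : {ω | dist (X ω) (Y ω) ≤ r} = (fun ω => (X ω, Y ω)) ⁻¹' A := rfl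
  rw [hev, ← Measure.map_apply (hX.prodMk hY) hAmeas, hmap,
    Measure.prod_apply hAmeas]
  have hball : ∀ x : EuclideanSpace ℝ (Fin m),
      μ (Prod.mk x ⁻¹' A) ≤ ENNReal.ofReal M' * (ENNReal.ofReal (r ^ m) * volume (ball (0 : EuclideanSpace ℝ (Fin m)) 1)) := by
    intro x
    have h1 : Prod.mk x ⁻¹' A = closedBall x r := by
      ext y; simp [hA, mem_closedBall, dist_comm]
    rw [h1, hμ, withDensity_apply _ measurableSet_closedBall]
    calc ∫⁻ y in closedBall x r, ENNReal.ofReal (f y)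
        ≤ ∫⁻ _ in closedBall x r, ENNReal.ofReal M' := by
          exact setLIntegral_mono measurable_const (fun y _ => ENNReal.ofReal_le_ofReal (hfM' y))
      _ = ENNReal.ofReal M' * volume (closedBall x r) := by
          rw [setLIntegral_const]
      _ = ENNReal.ofReal M' * (ENNReal.ofReal (r ^ m) * volume (ball (0 : EuclideanSpace ℝ (Fin m)) 1)) := by
          rw [Measure.addHaar_closedBall _ _ hr, finrank_euclideanSpace_fin]
  calc ∫⁻ x, μ (Prod.mk x ⁻¹' A) ∂μ
      ≤ ∫⁻ _, ENNReal.ofReal M' * (ENNReal.ofReal (r ^ m) * volume (ball (0 : EuclideanSpace ℝ (Fin m)) 1)) ∂μ :=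
        lintegral_mono hball
    _ = ENNReal.ofReal M' * (ENNReal.ofReal (r ^ m) * volume (ball (0 : EuclideanSpace ℝ (Fin m)) 1)) := by
        simp [lintegral_const]

end Measures

section EdgeCount

variable {m : ℕ} {f : EuclideanSpace ℝ (Fin m) → ℝ}
  {Ω : Type*} [MeasureSpace Ω] [IsProbabilityMeasure (ℙ : Measure Ω)]

lemma edge_count_bound {M' : ℝ} (hfM' : ∀ x, f x ≤ M') (hfm : Measurable f)
    (hprob : IsProbabilityMeasure (volume.withDensity fun x => ENNReal.ofReal (f x)))
    (X : ℕ → Ω → EuclideanSpace ℝ (Fin m)) (hmeas : ∀ i, Measurable (X i))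
    (hindep : iIndepFun X ℙ)
    (hlaw : ∀ i, Measure.map (X i) ℙ = volume.withDensity fun x => ENNReal.ofReal (f x))
    (n : ℕ) {r : ℝ} (hr : 0 ≤ r) {a : ℝ≥0∞} (ha : a ≠ 0) (ha' : a ≠ ⊤) :
    ℙ {ω | a ≤ ((Finset.univ.filter fun p : Fin n × Fin n =>
          p.1 ≠ p.2 ∧ dist (X p.1 ω) (X p.2 ω) ≤ r).card : ℝ≥0∞)}
      ≤ (n : ℝ≥0∞) ^ 2 * (ENNReal.ofReal M' * (ENNReal.ofReal (r ^ m)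
          * volume (ball (0 : EuclideanSpace ℝ (Fin m)) 1))) / a := by
  classical
  set b := ENNReal.ofReal M' * (ENNReal.ofReal (r ^ m)
      * volume (ball (0 : EuclideanSpace ℝ (Fin m)) 1)) with hb
  set g : Ω → ℝ≥0∞ := fun ω =>
    ∑ p : Fin n × Fin n, if p.1 ≠ p.2 ∧ dist (X p.1 ω) (X p.2 ω) ≤ r then 1 else 0 with hg
  have hSm : ∀ p : Fin n × Fin n,
      MeasurableSet {ω | p.1 ≠ p.2 ∧ dist (X p.1 ω) (X p.2 ω) ≤ r} := by
    intro p
    rcases eq_or_ne p.1 p.2 with he | he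
    · convert MeasurableSet.empty using 1
      ext ω; simp [he]
    · have : {ω | p.1 ≠ p.2 ∧ dist (X p.1 ω) (X p.2 ω) ≤ r}
          = (fun ω => dist (X p.1 ω) (X p.2 ω)) ⁻¹' Set.Iic r := by
        ext ω; simp [he]
      rw [this]
      exact (((hmeas p.1).dist (hmeas p.2))) measurableSet_Iic
  have hgmeas : Measurable g := by
    refine Finset.measurable_sum _ (fun p _ => Measurable.ite (hSm p) ?_ ?_) <;>
      exact measurable_const
  have hgeq : ∀ ω, ((Finset.univ.filter fun p : Fin n × Fin n =>
      p.1 ≠ p.2 ∧ dist (X p.1 ω) (X p.2 ω) ≤ r).card : ℝ≥0∞) = g ω := by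
    intro ω
    rw [hg]
    simp only [Finset.card_filter]
    push_cast
    rfl
  have hint : ∫⁻ ω, g ω ≤ (n : ℝ≥0∞) ^ 2 * b := by
    rw [hg]
    rw [lintegral_finset_sum _ (fun p _ => Measurable.ite (hSm p) measurable_const
      measurable_const)]
    have hterm : ∀ p : Fin n × Fin n,
        (∫⁻ ω, if p.1 ≠ p.2 ∧ dist (X p.1 ω) (X p.2 ω) ≤ r then (1:ℝ≥0∞) else 0) ≤ b := by
      intro p
      have : (fun ω => if p.1 ≠ p.2 ∧ dist (X p.1 ω) (X p.2 ω) ≤ r then (1:ℝ≥0∞) else 0)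
          = Set.indicator {ω | p.1 ≠ p.2 ∧ dist (X p.1 ω) (X p.2 ω) ≤ r} (fun _ => 1) := by
        ext ω; rw [Set.indicator_apply]; rfl
      rw [this]
      rw [show lintegral ℙ ({ω | p.1 ≠ p.2 ∧ dist (X (p.1 : ℕ) ω) (X (p.2 : ℕ) ω) ≤ r}.indicator
          fun _ => (1:ℝ≥0∞)) = ∫⁻ ω, ({ω | p.1 ≠ p.2 ∧ dist (X (p.1 : ℕ) ω) (X (p.2 : ℕ) ω) ≤ r}.indicator
          (fun _ => (1:ℝ≥0∞))) ω from rfl]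
      rw [lintegral_indicator (hSm p), setLIntegral_const, one_mul]
      rcases eq_or_ne p.1 p.2 with he | he
      · have : {ω | p.1 ≠ p.2 ∧ dist (X p.1 ω) (X p.2 ω) ≤ r} = ∅ := by
          ext ω; simp [he]
        simp [this]
      · have hij : (p.1 : ℕ) ≠ (p.2 : ℕ) := fun h => he (Fin.val_injective h)
        have hXY : IndepFun (X p.1) (X p.2) ℙ := hindep.indepFun hij
        calc ℙ {ω | p.1 ≠ p.2 ∧ dist (X p.1 ω) (X p.2 ω) ≤ r}
            ≤ ℙ {ω | dist (X p.1 ω) (X p.2 ω) ≤ r} :=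
              measure_mono (fun ω hω => hω.2)
          _ ≤ b := pair_prob_le f hfM' hfm hprob _ _ (hmeas p.1) (hmeas p.2) hXY
              (hlaw p.1) (hlaw p.2) hr
    calc ∑ p : Fin n × Fin n, ∫⁻ ω, (if p.1 ≠ p.2 ∧ dist (X p.1 ω) (X p.2 ω) ≤ r
          then (1:ℝ≥0∞) else 0)
        ≤ ∑ _p : Fin n × Fin n, b := Finset.sum_le_sum (fun p _ => hterm p)
      _ = (n : ℝ≥0∞) ^ 2 * b := by
          rw [Finset.sum_const, Finset.card_univ, Fintype.card_prod, Fintype.card_fin]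
          rw [nsmul_eq_mul, sq]
          push_cast
          ring
  calc ℙ {ω | a ≤ ((Finset.univ.filter fun p : Fin n × Fin n =>
        p.1 ≠ p.2 ∧ dist (X p.1 ω) (X p.2 ω) ≤ r).card : ℝ≥0∞)}
      = ℙ {ω | a ≤ g ω} := by
        congr 1; ext ω; rw [Set.mem_setOf_eq, Set.mem_setOf_eq, hgeq ω]
    _ ≤ (∫⁻ ω, g ω) / a := meas_ge_le_lintegral_div hgmeas.aemeasurable ha ha'
    _ ≤ (n : ℝ≥0∞) ^ 2 * b / a := by
        exact ENNReal.div_le_div_right hint a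

end EdgeCount

section LLN

variable {m : ℕ} {f : EuclideanSpace ℝ (Fin m) → ℝ}
  {Ω : Type*} [MeasureSpace Ω] [IsProbabilityMeasure (ℙ : Measure Ω)]

lemma lln_indicator (X : ℕ → Ω → EuclideanSpace ℝ (Fin m)) (hmeas : ∀ i, Measurable (X i))
    (hindep : iIndepFun X ℙ)
    (hlaw : ∀ i, Measure.map (X i) ℙ = volume.withDensity fun x => ENNReal.ofReal (f x))
    (Kc : Set (EuclideanSpace ℝ (Fin m))) (hKc : MeasurableSet Kc)
    {β' : ℝ}
    (hβ' : β' < (((volume.withDensity fun x => ENNReal.ofReal (f x)) Kc).toReal)) :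
    Tendsto (fun n : ℕ => ℙ {ω | (∑ i : Fin n,
        Set.indicator Kc (fun _ => (1:ℝ)) (X i ω)) < β' * n}) atTop (𝓝 0) := by
  classical
  set μ := volume.withDensity fun x => ENNReal.ofReal (f x) with hμ
  set p := (μ Kc).toReal with hp
  set g : EuclideanSpace ℝ (Fin m) → ℝ := Set.indicator Kc (fun _ => 1) with hgdef
  have hgm : Measurable g := measurable_const.indicator hKc
  set Y : ℕ → Ω → ℝ := fun i ω => g (X i ω) with hY
  have hYmeas : ∀ i, Measurable (Y i) := fun i => hgm.comp (hmeas i)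
  have hYpre : ∀ i, Y i = Set.indicator (X i ⁻¹' Kc) (fun _ => (1:ℝ)) := by
    intro i; funext ω
    by_cases h : X i ω ∈ Kc <;>
      simp [hY, hgdef, Set.indicator_apply, h]
  have hindepY : Pairwise (fun i j => IndepFun (Y i) (Y j) ℙ) := by
    intro i j hij
    exact (hindep.indepFun hij).comp hgm hgm
  have hidentY : ∀ i, IdentDistrib (Y i) (Y 0) ℙ ℙ := by
    intro i
    have hXid : IdentDistrib (X i) (X 0) ℙ ℙ :=
      ⟨(hmeas i).aemeasurable, (hmeas 0).aemeasurable, by rw [hlaw i, hlaw 0]⟩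
    exact hXid.comp hgm
  have hint : Integrable (Y 0) ℙ := by
    rw [hYpre 0]
    exact (integrable_const (1:ℝ)).indicator ((hmeas 0) hKc)
  have hEY : ℙ[Y 0] = p := by
    rw [hYpre 0, integral_indicator_const _ ((hmeas 0) hKc), smul_eq_mul, mul_one, hp, measureReal_def,
      ← Measure.map_apply (hmeas 0) hKc, hlaw 0]
  have hae := strong_law_ae_real Y hint hindepY hidentY
  rw [hEY] at hae
  have htim : TendstoInMeasure ℙ
      (fun n ω => (∑ i ∈ Finset.range n, Y i ω) / n) atTop (fun _ => p) := by
    refine tendstoInMeasure_of_tendsto_ae (fun n => ?_) hae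
    exact ((Finset.measurable_sum _ (fun i _ => hYmeas i)).div_const _).aestronglyMeasurable
  have hε : 0 < p - β' := by linarith
  have hkey := tendstoInMeasure_iff_dist.mp htim (p - β') hε
  refine tendsto_of_tendsto_of_tendsto_of_le_of_le' tendsto_const_nhds hkey ?_ ?_
  · exact Eventually.of_forall (fun n => zero_le)
  · filter_upwards [eventually_ge_atTop 1] with n hn
    refine measure_mono ?_
    intro ω hω
    rw [Set.mem_setOf_eq] at hω ⊢
    have hsum : (∑ i ∈ Finset.range n, Y i ω) =
        (∑ i : Fin n, Set.indicator Kc (fun _ => (1:ℝ)) (X i ω)) := by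
      rw [← Fin.sum_univ_eq_sum_range (fun i => Y i ω) n]
    have hnpos : (0:ℝ) < n := by exact_mod_cast hn
    have hAn : (∑ i ∈ Finset.range n, Y i ω) / n < β' := by
      rw [hsum]
      rw [div_lt_iff₀ hnpos]
      exact hω
    have : p - (∑ i ∈ Finset.range n, Y i ω) / n > p - β' := by linarith
    rw [Real.dist_eq]
    rw [abs_sub_comm]
    rw [abs_of_pos (by linarith)]
    linarith

end LLN

section Main

variable {m : ℕ}

lemma exists_compact_density {f : EuclideanSpace ℝ (Fin m) → ℝ}
    (hprob : IsProbabilityMeasure (volume.withDensity fun x => ENNReal.ofReal (f x)))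
    {β' : ℝ} (hβ'0 : 0 < β') (hβ' : β' < 1) :
    ∃ R : ℕ, β' < (((volume.withDensity fun x => ENNReal.ofReal (f x))
        (closedBall (0 : EuclideanSpace ℝ (Fin m)) R)).toReal) := by
  set μ := volume.withDensity fun x => ENNReal.ofReal (f x) with hμ
  have hmono : Monotone (fun R : ℕ => closedBall (0 : EuclideanSpace ℝ (Fin m)) R) := by
    intro a b hab
    exact closedBall_subset_closedBall (by exact_mod_cast hab)
  have hUnion : (⋃ R : ℕ, closedBall (0 : EuclideanSpace ℝ (Fin m)) R) = Set.univ := by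
    ext x
    simp only [Set.mem_iUnion, mem_closedBall, Set.mem_univ, iff_true]
    exact ⟨⌈dist x 0⌉₊, Nat.le_ceil _⟩
  have htend := tendsto_measure_iUnion_atTop (μ := μ) hmono
  rw [hUnion, measure_univ] at htend
  have hlt : ENNReal.ofReal β' < 1 := by
    rw [← ENNReal.ofReal_one]
    exact (ENNReal.ofReal_lt_ofReal_iff zero_lt_one).mpr hβ'
  have := htend.eventually (lt_mem_nhds hlt)
  obtain ⟨R, hR⟩ := this.exists
  refine ⟨R, ?_⟩
  have hfin : μ (closedBall (0 : EuclideanSpace ℝ (Fin m)) R) ≠ ⊤ :=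
    (measure_lt_top μ _).ne
  exact (ENNReal.ofReal_lt_iff_lt_toReal hβ'0.le hfin).mp hR

end Main

lemma part1 {m : ℕ}
    (f : EuclideanSpace ℝ (Fin m) → ℝ)
    (hfm : Measurable f)
    (hprob : IsProbabilityMeasure (volume.withDensity fun x => ENNReal.ofReal (f x)))
    {γ₁ γ₂ : ℝ} (hγ1 : 0 < γ₁) (hγ12 : γ₁ < γ₂) (hγ2 : γ₂ < 1)
    (w : ℕ → ℕ) (hw : ∀ᶠ n : ℕ in atTop, γ₁ * n < (w n : ℝ) ∧ (w n : ℝ) < γ₂ * n)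
    {Ω : Type*} [MeasureSpace Ω] [IsProbabilityMeasure (ℙ : Measure Ω)]
    (X : ℕ → Ω → EuclideanSpace ℝ (Fin m)) (hmeas : ∀ i, Measurable (X i))
    (hindep : iIndepFun X ℙ)
    (hlaw : ∀ i, Measure.map (X i) ℙ = volume.withDensity fun x => ENNReal.ofReal (f x)) :
    TendstoInMeasure ℙ (fun n ω => ripsDeath (fun i : Fin n => X i ω) (w n)) atTop
      (fun _ => (0 : ℝ)) := by
  classical
  rw [tendstoInMeasure_iff_dist]
  intro ε hε
  set β' : ℝ := (γ₂ + 1) / 2 with hβ'def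
  have hβ'0 : 0 < β' := by rw [hβ'def]; linarith
  have hβ'1 : β' < 1 := by rw [hβ'def]; linarith
  have hγ2β' : γ₂ < β' := by rw [hβ'def]; linarith
  obtain ⟨R, hR⟩ := exists_compact_density (f := f) hprob hβ'0 hβ'1
  set Kc := closedBall (0 : EuclideanSpace ℝ (Fin m)) R with hKcdef
  have hKcmeas : MeasurableSet Kc := measurableSet_closedBall
  -- finite subcover of Kc by balls of radius ε/4
  have hcover : Kc ⊆ ⋃ c ∈ Kc, ball c (ε / 4) := by
    intro x hx
    exact Set.mem_biUnion hx (mem_ball_self (by linarith))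
  obtain ⟨t, ht⟩ := (isCompact_closedBall (0 : EuclideanSpace ℝ (Fin m)) R).elim_finite_subcover_image
    (fun c _ => isOpen_ball) hcover
  obtain ⟨htsub, htfin, htcov⟩ := ht
  set tf : Finset (EuclideanSpace ℝ (Fin m)) := htfin.toFinset with htf
  have htcov' : ∀ y ∈ Kc, ∃ c ∈ tf, dist y c < ε / 4 := by
    intro y hy
    have := htcov hy
    simp only [Set.mem_iUnion, exists_prop] at this
    obtain ⟨c, hct, hyc⟩ := this
    exact ⟨c, htfin.mem_toFinset.mpr hct, mem_ball.mp hyc⟩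
  have hlln := lln_indicator (f := f) X hmeas hindep hlaw Kc hKcmeas hR
  refine tendsto_of_tendsto_of_tendsto_of_le_of_le' tendsto_const_nhds hlln
    (Eventually.of_forall (fun n => zero_le)) ?_
  have hev2 : ∀ᶠ n : ℕ in atTop, (tf.card : ℝ) ≤ (β' - γ₂) * n := by
    have : Tendsto (fun n : ℕ => (β' - γ₂) * n) atTop atTop :=
      Tendsto.const_mul_atTop (by linarith) tendsto_natCast_atTop_atTop
    exact this.eventually_ge_atTop _
  filter_upwards [hw, hev2, eventually_ge_atTop 1] with n hwn htfn hn1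
  refine measure_mono ?_
  intro ω hω
  rw [Set.mem_setOf_eq] at hω ⊢
  by_contra hcon
  push_neg at hcon
  -- hcon : β' * n ≤ ∑ indicator
  set x : Fin n → EuclideanSpace ℝ (Fin m) := fun i => X i ω with hx
  set S : Finset (Fin n) := Finset.univ.filter (fun i => x i ∈ Kc) with hS
  have hsumS : (∑ i : Fin n, Set.indicator Kc (fun _ => (1:ℝ)) (X i ω)) = (S.card : ℝ) := by
    rw [hS, Finset.card_filter]
    push_cast
    refine Finset.sum_congr rfl (fun i _ => ?_)
    by_cases h : x i ∈ Kc <;> simp [Set.indicator_apply, h, hx]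
  rw [hsumS] at hcon
  have hScard : β' * n ≤ (S.card : ℝ) := hcon
  have hcomp := comps_le_cover x (r := ε / 2) tf S ?_
  swap
  · intro i hi
    have hiK : x i ∈ Kc := (Finset.mem_filter.mp hi).2
    obtain ⟨c, hct, hd⟩ := htcov' (x i) hiK
    exact ⟨c, hct, by linarith⟩
  -- numeric: t.card + (n - S.card) ≤ n - w n
  have hwn2 : (w n : ℝ) + tf.card ≤ (S.card : ℝ) := by
    calc (w n : ℝ) + tf.card ≤ γ₂ * n + (β' - γ₂) * n := by
          have := hwn.2; linarith
      _ = β' * n := by ring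
      _ ≤ S.card := hScard
  have hwn3 : w n + tf.card ≤ S.card := by exact_mod_cast hwn2
  have hSn : S.card ≤ n := by
    calc S.card ≤ Finset.univ.card := Finset.card_le_card (Finset.subset_univ S)
      _ = n := by simp
  have hfinal : Nat.card (ripsGraph x (ε/2)).ConnectedComponent ≤ n - w n := by omega
  have hd : ripsDeath x (w n) ≤ ε / 2 := ripsDeath_le (by linarith) hfinal
  have : dist (ripsDeath x (w n)) 0 < ε := by
    rw [Real.dist_eq, sub_zero, abs_of_nonneg (ripsDeath_nonneg x (w n))]
    linarith
  rw [hx] at this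
  exact absurd hω (not_le.mpr this)

lemma part2 {m : ℕ}
    (f : EuclideanSpace ℝ (Fin m) → ℝ)
    (hfm : Measurable f)
    {M' : ℝ} (hM'0 : 0 ≤ M') (hfM' : ∀ x, f x ≤ M')
    (hprob : IsProbabilityMeasure (volume.withDensity fun x => ENNReal.ofReal (f x)))
    {γ₁ γ₂ : ℝ} (hγ1 : 0 < γ₁) (hγ12 : γ₁ < γ₂) (hγ2 : γ₂ < 1)
    (w : ℕ → ℕ) (hw : ∀ᶠ n : ℕ in atTop, γ₁ * n < (w n : ℝ) ∧ (w n : ℝ) < γ₂ * n)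
    {Ω : Type*} [MeasureSpace Ω] [IsProbabilityMeasure (ℙ : Measure Ω)]
    (X : ℕ → Ω → EuclideanSpace ℝ (Fin m)) (hmeas : ∀ i, Measurable (X i))
    (hindep : iIndepFun X ℙ)
    (hlaw : ∀ i, Measure.map (X i) ℙ = volume.withDensity fun x => ENNReal.ofReal (f x)) :
    ∀ K > (0 : ℝ),
      Tendsto (fun n : ℕ =>
          (ℙ {ω | K ≤ (n : ℝ) * ripsDeath (fun i : Fin n => X i ω) (w n) ^ ((m : ℝ) / 2)}).toReal)
        atTop (𝓝 1) := by
  classical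
  intro K hK
  rcases Nat.eq_zero_or_pos m with rfl | hm
  · -- m = 0 : exponent is 0, d ^ 0 = 1
    have hev : ∀ᶠ n : ℕ in atTop,
        (ℙ {ω | K ≤ (n : ℝ) * ripsDeath (fun i : Fin n => X i ω) (w n)
          ^ (((0:ℕ) : ℝ) / 2)}).toReal = 1 := by
      filter_upwards [eventually_ge_atTop ⌈K⌉₊] with n hn
      have hset : {ω : Ω | K ≤ (n : ℝ) * ripsDeath (fun i : Fin n => X i ω) (w n)
          ^ (((0:ℕ) : ℝ) / 2)} = Set.univ := by
        ext ω
        simp only [Set.mem_setOf_eq, Set.mem_univ, iff_true]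
        rw [show (((0:ℕ) : ℝ) / 2) = 0 by norm_num, Real.rpow_zero, mul_one]
        calc K ≤ (⌈K⌉₊ : ℝ) := Nat.le_ceil K
          _ ≤ n := by exact_mod_cast hn
      rw [hset, measure_univ, ENNReal.toReal_one]
    exact Tendsto.congr' (hev.mono fun n h => h.symm) tendsto_const_nhds
  -- m ≥ 1
  set V := volume (ball (0 : EuclideanSpace ℝ (Fin m)) 1) with hV
  have hVfin : V ≠ ⊤ := measure_ball_lt_top.ne
  set rr : ℕ → ℝ := fun n => (K / n) ^ (2 / (m : ℝ)) with hrr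
  set e : ℕ → ℝ≥0∞ := fun n =>
    ENNReal.ofReal M' * ENNReal.ofReal (K ^ 2) * V / ENNReal.ofReal (γ₁ * n) with he
  have hmR : (0:ℝ) < m := by exact_mod_cast hm
  -- each complement has small measure
  have hbound : ∀ᶠ n : ℕ in atTop,
      ℙ {ω | K ≤ (n : ℝ) * ripsDeath (fun i : Fin n => X i ω) (w n) ^ ((m : ℝ) / 2)}ᶜ ≤ e n := by
    filter_upwards [hw, eventually_ge_atTop 1] with n hwn hn1
    have hnR : (0:ℝ) < n := by exact_mod_cast hn1
    have hKn : 0 < K / n := div_pos hK hnR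
    have hrpos : 0 < rr n := Real.rpow_pos_of_pos hKn _
    have hwpos : 0 < w n := by
      by_contra h
      push_neg at h
      interval_cases h' : w n
      · have := hwn.1
        simp [h'] at this
        nlinarith
    have hwltn : w n < n := by
      have h2 := hwn.2
      have : (w n : ℝ) < n := lt_trans h2 (by nlinarith)
      exact_mod_cast this
    -- complement ⊆ many-pairs event
    have hsub : {ω | K ≤ (n : ℝ) * ripsDeath (fun i : Fin n => X i ω) (w n) ^ ((m : ℝ) / 2)}ᶜ
        ⊆ {ω | ((w n : ℕ) : ℝ≥0∞) ≤ ((Finset.univ.filter fun p : Fin n × Fin n =>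
            p.1 ≠ p.2 ∧ dist (X p.1 ω) (X p.2 ω) ≤ rr n).card : ℝ≥0∞)} := by
      intro ω hω
      rw [Set.mem_compl_iff, Set.mem_setOf_eq, not_le] at hω
      set x : Fin n → EuclideanSpace ℝ (Fin m) := fun i => X i ω with hx
      -- first : ripsDeath x (w n) < rr n
      have hdlt : ripsDeath x (w n) < rr n := by
        by_contra hge
        push_neg at hge
        have h1 : rr n ^ ((m : ℝ) / 2) ≤ ripsDeath x (w n) ^ ((m : ℝ) / 2) :=
          Real.rpow_le_rpow hrpos.le hge (by positivity)
        have h2 : rr n ^ ((m : ℝ) / 2) = K / n := by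
          show ((K / (n:ℝ)) ^ (2 / (m : ℝ))) ^ ((m : ℝ) / 2) = K / n
          rw [← Real.rpow_mul hKn.le,
            show 2 / (m : ℝ) * ((m : ℝ) / 2) = 1 by field_simp, Real.rpow_one]
        have h3 : K ≤ (n : ℝ) * ripsDeath x (w n) ^ ((m : ℝ) / 2) := by
          calc K = n * (K / n) := by field_simp
            _ ≤ n * ripsDeath x (w n) ^ ((m : ℝ) / 2) := by
                rw [← h2]; exact mul_le_mul_of_nonneg_left h1 hnR.le
        exact absurd hω (not_lt.mpr h3)
      have hcomps := comps_le_of_ripsDeath_lt hwltn hdlt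
      have hpairs := comps_ge_sub_pairs x (rr n)
      have hcard : w n ≤ (Finset.univ.filter fun p : Fin n × Fin n =>
          p.1 ≠ p.2 ∧ dist (x p.1) (x p.2) ≤ rr n).card := by omega
      rw [Set.mem_setOf_eq]
      exact_mod_cast Nat.cast_le.mpr hcard
    refine le_trans (measure_mono hsub) ?_
    have hwne : ((w n : ℕ) : ℝ≥0∞) ≠ 0 := by
      simp only [ne_eq, Nat.cast_eq_zero]
      omega
    have hbd := edge_count_bound (f := f) hfM' hfm hprob X hmeas hindep hlaw n
      hrpos.le hwne (ENNReal.natCast_ne_top _)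
    refine le_trans hbd ?_
    -- rearrange the bound
    have hrrm : rr n ^ m = (K / n) ^ 2 := by
      rw [hrr, ← Real.rpow_natCast ((K / n) ^ (2 / (m:ℝ))) m, ← Real.rpow_mul hKn.le,
        show 2 / (m : ℝ) * (m : ℝ) = 2 by field_simp, ← Real.rpow_natCast (K/n) 2]
      norm_num
    have hnum : (n : ℝ≥0∞) ^ 2 * (ENNReal.ofReal M' * (ENNReal.ofReal (rr n ^ m) * V))
        = ENNReal.ofReal M' * ENNReal.ofReal (K ^ 2) * V := by
      rw [hrrm]
      have h1 : (n : ℝ≥0∞) ^ 2 = ENNReal.ofReal ((n:ℝ) ^ 2) := by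
        rw [ENNReal.ofReal_pow hnR.le]
        congr 1
        exact (ENNReal.ofReal_natCast n).symm
      have h2 : ENNReal.ofReal ((n:ℝ) ^ 2) * ENNReal.ofReal ((K / n) ^ 2)
          = ENNReal.ofReal (K ^ 2) := by
        rw [← ENNReal.ofReal_mul (by positivity)]
        congr 1
        field_simp
      calc (n : ℝ≥0∞) ^ 2 * (ENNReal.ofReal M' * (ENNReal.ofReal ((K / n) ^ 2) * V))
          = ENNReal.ofReal M' * (ENNReal.ofReal ((n:ℝ) ^ 2) * ENNReal.ofReal ((K / n) ^ 2)) * V := by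
            rw [h1]; ring
        _ = ENNReal.ofReal M' * ENNReal.ofReal (K ^ 2) * V := by rw [h2]
    rw [hnum]
    refine ENNReal.div_le_div le_rfl ?_
    rw [← ENNReal.ofReal_natCast (w n)]
    exact ENNReal.ofReal_le_ofReal (hwn.1.le)
  -- e n → 0
  have he0 : Tendsto e atTop (𝓝 0) := by
    have hdenom : Tendsto (fun n : ℕ => ENNReal.ofReal (γ₁ * n)) atTop (𝓝 ⊤) := by
      refine ENNReal.tendsto_nhds_top (fun k => ?_)
      have : ∀ᶠ n : ℕ in atTop, (k : ℝ) < γ₁ * n := by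
        have : Tendsto (fun n : ℕ => γ₁ * n) atTop atTop :=
          Tendsto.const_mul_atTop hγ1 tendsto_natCast_atTop_atTop
        exact this.eventually_gt_atTop _
      filter_upwards [this] with n hn
      calc (k : ℝ≥0∞) = ENNReal.ofReal k := by simp [ENNReal.ofReal_natCast]
        _ < ENNReal.ofReal (γ₁ * n) := by
            rw [ENNReal.ofReal_lt_ofReal_iff (lt_of_le_of_lt (Nat.cast_nonneg k) hn)]
            exact hn
    have := ENNReal.Tendsto.const_div (a := ENNReal.ofReal M' * ENNReal.ofReal (K ^ 2) * V)
      hdenom (Or.inr ?_)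
    · simpa [ENNReal.div_top] using this
    · exact ENNReal.mul_ne_top (ENNReal.mul_ne_top ENNReal.ofReal_ne_top
        ENNReal.ofReal_ne_top) hVfin
  -- squeeze the toReal probabilities
  have hefin : ∀ᶠ n : ℕ in atTop, e n ≠ ⊤ := by
    filter_upwards [eventually_ge_atTop 1] with n hn1
    have hnR : (0:ℝ) < n := by exact_mod_cast hn1
    refine (ENNReal.div_lt_top (ENNReal.mul_ne_top (ENNReal.mul_ne_top ENNReal.ofReal_ne_top
        ENNReal.ofReal_ne_top) hVfin) ?_).ne
    simp only [ne_eq, ENNReal.ofReal_eq_zero, not_le]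
    positivity
  have hetoReal : Tendsto (fun n => (e n).toReal) atTop (𝓝 0) := by
    have := (ENNReal.tendsto_toReal (by simp : (0:ℝ≥0∞) ≠ ⊤)).comp he0
    simpa [Function.comp_def] using this
  refine tendsto_of_tendsto_of_tendsto_of_le_of_le'
    (by simpa using tendsto_const_nhds.sub hetoReal :
      Tendsto (fun n : ℕ => 1 - (e n).toReal) atTop (𝓝 1))
    (tendsto_const_nhds : Tendsto (fun _ : ℕ => (1:ℝ)) atTop (𝓝 1)) ?_ ?_
  · -- lower bound
    filter_upwards [hbound, hefin] with n hb hef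
    set A := {ω | K ≤ (n : ℝ) * ripsDeath (fun i : Fin n => X i ω) (w n) ^ ((m : ℝ) / 2)} with hA
    have h1 : (1:ℝ≥0∞) ≤ ℙ A + e n := by
      calc (1:ℝ≥0∞) = ℙ (Set.univ : Set Ω) := (measure_univ).symm
        _ = ℙ (A ∪ Aᶜ) := by rw [Set.union_compl_self]
        _ ≤ ℙ A + ℙ Aᶜ := measure_union_le _ _
        _ ≤ ℙ A + e n := by gcongr
    have hfin : ℙ A + e n ≠ ⊤ :=
      ENNReal.add_ne_top.mpr ⟨(measure_lt_top _ _).ne, hef⟩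
    have h2 : (1:ℝ) ≤ (ℙ A + e n).toReal := by
      calc (1:ℝ) = (1:ℝ≥0∞).toReal := by simp
        _ ≤ (ℙ A + e n).toReal := ENNReal.toReal_mono hfin h1
    have h3 : (ℙ A + e n).toReal ≤ (ℙ A).toReal + (e n).toReal := ENNReal.toReal_add_le
    linarith
  · -- upper bound
    refine Eventually.of_forall (fun n => ?_)
    have : ℙ {ω | K ≤ (n : ℝ) * ripsDeath (fun i : Fin n => X i ω) (w n) ^ ((m : ℝ) / 2)} ≤ 1 :=
      prob_le_one
    calc (ℙ _).toReal ≤ (1:ℝ≥0∞).toReal := ENNReal.toReal_mono (by simp) this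
      _ = 1 := by simp

/-- Let `f` be a Lipschitz, bounded probability density on `ℝ^m`,
`0 < γ₁ < γ₂ < 1`, and `(ω_n)` integers with `γ₁ n < ω_n < γ₂ n` for large `n`.  For i.i.d.
samples with density `f`, the quantile death time `d_{ω_n}` tends to `0` in probability, and
`n · d_{ω_n}^{m/2} → ∞` in probability (for every `K > 0`,
`P(n · d_{ω_n}^{m/2} ≥ K) → 1`); i.e. `d_{ω_n}` satisfies the defining limits of an
admissible bandwidth in probability. -/
theorem ripsDeath_admissible_in_probability {m : ℕ}
    (f : EuclideanSpace ℝ (Fin m) → ℝ) (hf0 : ∀ x, 0 ≤ f x) (hfint : ∫ x, f x = 1)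
    {M : ℝ} (hM : 0 < M) (hLip : LipschitzWith M.toNNReal f)
    {M' : ℝ} (hfM' : ∀ x, f x ≤ M')
    {γ₁ γ₂ : ℝ} (hγ1 : 0 < γ₁) (hγ12 : γ₁ < γ₂) (hγ2 : γ₂ < 1)
    (w : ℕ → ℕ) (hw : ∀ᶠ n : ℕ in atTop, γ₁ * n < (w n : ℝ) ∧ (w n : ℝ) < γ₂ * n)
    {Ω : Type*} [MeasureSpace Ω] [IsProbabilityMeasure (ℙ : Measure Ω)]
    (X : ℕ → Ω → EuclideanSpace ℝ (Fin m)) (hmeas : ∀ i, Measurable (X i))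
    (hindep : iIndepFun X ℙ)
    (hlaw : ∀ i, Measure.map (X i) ℙ = volume.withDensity fun x => ENNReal.ofReal (f x)) :
    TendstoInMeasure ℙ (fun n ω => ripsDeath (fun i : Fin n => X i ω) (w n)) atTop
      (fun _ => (0 : ℝ)) ∧
    ∀ K > (0 : ℝ),
      Tendsto (fun n : ℕ =>
          (ℙ {ω | K ≤ (n : ℝ) * ripsDeath (fun i : Fin n => X i ω) (w n) ^ ((m : ℝ) / 2)}).toReal)
        atTop (nhds 1) := by
  have hfm : Measurable f := hLip.continuous.measurable
  have hprob : IsProbabilityMeasure (volume.withDensity fun x => ENNReal.ofReal (f x)) :=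
    prob_of_density f hf0 hfint hfm
  have hM'0 : 0 ≤ M' := le_trans (hf0 0) (hfM' 0)
  exact ⟨part1 f hfm hprob hγ1 hγ12 hγ2 w hw X hmeas hindep hlaw,
    part2 f hfm hM'0 hfM' hprob hγ1 hγ12 hγ2 w hw X hmeas hindep hlaw⟩
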